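/- There exist positive paths γ⁺, γ⁻ : [0,∞) → Sp(2) such that trace(γ⁺(t)) → +∞ and trace(γ⁻(t)) → −∞ as t → ∞. -/

import Mathlib

open Matrix Set Real Filter

attribute [local instance] Matrix.normedAddCommGroup Matrix.normedSpace

/-- The standard complex structure on `ℝ²`. -/
def J2 : Matrix (Fin 2) (Fin 2) ℝ := !![0, -1; 1, 0]

/-- A positive path in `Sp(2)` on the parameter set `s`. -/
def IsPosPath2 (s : Set ℝ) (A : ℝ → Matrix (Fin 2) (Fin 2) ℝ) : Prop :=
  ∀ t ∈ s, (A t)ᵀ * J2 * A t = J2 ∧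
    ∃ P : Matrix (Fin 2) (Fin 2) ℝ, P.IsSymm ∧ P.PosDef ∧
      HasDerivWithinAt A (J2 * P * A t) s t

/-! ### Auxiliary constructions

We use the path `γ⁻(t) = S(t) · R(θ(t))` where `S(t) = !![1, 0; 1 + t², 1]` is a shear and
`R(θ)` is the rotation by angle `θ(t) = 2 arctan t`, so that
`cos θ = (1 - t²)/(1 + t²)`, `sin θ = 2t/(1 + t²)` are rational.  Its trace is
`-2t - 2 + 4/(1 + t²) → -∞`, and `γ⁺ = -γ⁻`. -/

/-- The explicit positive path with trace tending to `-∞`. -/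
noncomputable def gmPath (t : ℝ) : Matrix (Fin 2) (Fin 2) ℝ :=
  !![(1 - t^2)/(1 + t^2), (-2*t)/(1 + t^2);
     (1 + 2*t - t^4)/(1 + t^2), (1 - 2*t - t^2 - 2*t^3)/(1 + t^2)]

/-- The entrywise derivative of `gmPath`. -/
noncomputable def gmDeriv (t : ℝ) : Matrix (Fin 2) (Fin 2) ℝ :=
  !![(-4*t)/(1+t^2)^2, (2*t^2 - 2)/(1+t^2)^2;
     (2 - 2*t - 2*t^2 - 4*t^3 - 2*t^5)/(1+t^2)^2, (-2 - 4*t - 4*t^2 - 2*t^4)/(1+t^2)^2]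

/-- The generating symmetric positive definite matrix family. -/
noncomputable def gmP (t : ℝ) : Matrix (Fin 2) (Fin 2) ℝ :=
  !![(2 + 2*(1 + t^2)^2 + 2*t + 2*t^3)/(1 + t^2), -2;
     -2, 2/(1 + t^2)]

theorem posdef_fin_two {a b d : ℝ} (ha : 0 < a) (hdet : 0 < a * d - b * b) :
    (!![a, b; b, d]).PosDef := by
  rw [Matrix.posDef_iff_dotProduct_mulVec]
  constructor
  · ext i j
    fin_cases i <;> fin_cases j <;>
      simp [Matrix.IsHermitian, Matrix.conjTranspose, Matrix.transpose,
        Matrix.vecHead, Matrix.vecTail]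
  · intro x hx
    have hq : star x ⬝ᵥ (!![a, b; b, d] *ᵥ x) =
        a * x 0 ^ 2 + 2 * b * (x 0 * x 1) + d * x 1 ^ 2 := by
      simp [Matrix.mulVec, dotProduct, Fin.sum_univ_two]
      ring
    rw [hq]
    by_cases hx1 : x 1 = 0
    · have hx0 : x 0 ≠ 0 := by
        intro h0
        apply hx
        funext i
        fin_cases i <;> simp [h0, hx1]
      have h0 : 0 < x 0 ^ 2 := (sq_nonneg (x 0)).lt_of_ne (Ne.symm (pow_ne_zero 2 hx0))
      rw [hx1]
      nlinarith [mul_pos ha h0]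
    · have h1 : 0 < x 1 ^ 2 := (sq_nonneg (x 1)).lt_of_ne (Ne.symm (pow_ne_zero 2 hx1))
      nlinarith [sq_nonneg (a * x 0 + b * x 1), mul_pos hdet h1]

theorem hasDerivWithinAt_matrix' {A : ℝ → Matrix (Fin 2) (Fin 2) ℝ}
    {A' : Matrix (Fin 2) (Fin 2) ℝ} {s : Set ℝ} {t : ℝ}
    (h : ∀ i j, HasDerivWithinAt (fun τ => A τ i j) (A' i j) s t) :
    HasDerivWithinAt A A' s t := by
  rw [hasDerivWithinAt_iff_hasFDerivWithinAt]
  apply hasFDerivWithinAt_pi'.2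
  intro i
  apply hasFDerivWithinAt_pi'.2
  intro j
  have := (h i j).hasFDerivWithinAt
  convert this using 1
  all_goals first | rfl | (ext; rfl)

theorem gm_hd00 (t : ℝ) :
    HasDerivAt (fun τ : ℝ => (1 - τ^2)/(1 + τ^2)) ((-4*t)/(1+t^2)^2) t := by
  have hne : (1:ℝ) + t^2 ≠ 0 := by positivity
  have h1 : HasDerivAt (fun τ : ℝ => 1 - τ^2) (-(2*t)) t := by
    simpa using (hasDerivAt_pow 2 t).const_sub 1
  have h2 : HasDerivAt (fun τ : ℝ => 1 + τ^2) (2*t) t := by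
    simpa using (hasDerivAt_pow 2 t).const_add 1
  have h := h1.div h2 hne
  refine h.congr_deriv ?_
  field_simp
  ring

theorem gm_hd01 (t : ℝ) :
    HasDerivAt (fun τ : ℝ => (-2*τ)/(1 + τ^2)) ((2*t^2 - 2)/(1+t^2)^2) t := by
  have hne : (1:ℝ) + t^2 ≠ 0 := by positivity
  have h1 : HasDerivAt (fun τ : ℝ => -2*τ) (-2) t := by
    simpa using (hasDerivAt_id t).const_mul (-2 : ℝ)
  have h2 : HasDerivAt (fun τ : ℝ => 1 + τ^2) (2*t) t := by
    simpa using (hasDerivAt_pow 2 t).const_add 1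
  have h := h1.div h2 hne
  refine h.congr_deriv ?_
  field_simp
  ring

theorem gm_hd10 (t : ℝ) :
    HasDerivAt (fun τ : ℝ => (1 + 2*τ - τ^4)/(1 + τ^2))
      ((2 - 2*t - 2*t^2 - 4*t^3 - 2*t^5)/(1+t^2)^2) t := by
  have hne : (1:ℝ) + t^2 ≠ 0 := by positivity
  have h1 : HasDerivAt (fun τ : ℝ => 1 + 2*τ - τ^4) (2 - 4*t^3) t := by
    have := (((hasDerivAt_id t).const_mul (2:ℝ)).const_add 1).sub (hasDerivAt_pow 4 t)
    refine this.congr_deriv ?_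
    norm_num
  have h2 : HasDerivAt (fun τ : ℝ => 1 + τ^2) (2*t) t := by
    simpa using (hasDerivAt_pow 2 t).const_add 1
  have h := h1.div h2 hne
  refine h.congr_deriv ?_
  field_simp
  ring

theorem gm_hd11 (t : ℝ) :
    HasDerivAt (fun τ : ℝ => (1 - 2*τ - τ^2 - 2*τ^3)/(1 + τ^2))
      ((-2 - 4*t - 4*t^2 - 2*t^4)/(1+t^2)^2) t := by
  have hne : (1:ℝ) + t^2 ≠ 0 := by positivity
  have h1 : HasDerivAt (fun τ : ℝ => 1 - 2*τ - τ^2 - 2*τ^3) (-2 - 2*t - 6*t^2) t := by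
    have := ((((hasDerivAt_id t).const_mul (2:ℝ)).const_sub 1).sub (hasDerivAt_pow 2 t)).sub
      ((hasDerivAt_pow 3 t).const_mul (2:ℝ))
    refine this.congr_deriv ?_
    push_cast
    ring
  have h2 : HasDerivAt (fun τ : ℝ => 1 + τ^2) (2*t) t := by
    simpa using (hasDerivAt_pow 2 t).const_add 1
  have h := h1.div h2 hne
  refine h.congr_deriv ?_
  field_simp
  ring

theorem gm_hasDeriv (s : Set ℝ) (t : ℝ) : HasDerivWithinAt gmPath (gmDeriv t) s t := by
  apply hasDerivWithinAt_matrix'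
  intro i j
  fin_cases i <;> fin_cases j
  · exact (gm_hd00 t).hasDerivWithinAt
  · exact (gm_hd01 t).hasDerivWithinAt
  · exact (gm_hd10 t).hasDerivWithinAt
  · exact (gm_hd11 t).hasDerivWithinAt

theorem gm_key (t : ℝ) : J2 * gmP t * gmPath t = gmDeriv t := by
  have hne : (1:ℝ) + t^2 ≠ 0 := by positivity
  ext i j
  fin_cases i <;> fin_cases j <;>
    · simp [J2, gmP, gmPath, gmDeriv, Matrix.mul_apply, Fin.sum_univ_two]
      field_simp
      ring

theorem gm_sympl (t : ℝ) : (gmPath t)ᵀ * J2 * gmPath t = J2 := by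
  have h : (1 : ℝ) + t^2 ≠ 0 := by positivity
  ext i j
  fin_cases i <;> fin_cases j <;>
    · simp [gmPath, J2, Matrix.mul_apply, Fin.sum_univ_two, Matrix.transpose]
      field_simp
      ring

theorem gmP_isSymm (t : ℝ) : (gmP t).IsSymm := by
  unfold Matrix.IsSymm
  ext i j
  fin_cases i <;> fin_cases j <;>
    simp [gmP, Matrix.transpose, Matrix.vecHead, Matrix.vecTail]

theorem gmP_posDef {t : ℝ} (ht : 0 ≤ t) : (gmP t).PosDef := by
  have hq : (0:ℝ) < 1 + t^2 := by positivity
  have ha : 0 < (2 + 2*(1 + t^2)^2 + 2*t + 2*t^3)/(1 + t^2) := by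
    apply div_pos _ hq
    nlinarith [mul_nonneg ht (sq_nonneg t), sq_nonneg (1 + t^2)]
  have he : (2 + 2*(1 + t^2)^2 + 2*t + 2*t^3)/(1 + t^2) * (2/(1 + t^2)) - (-2 : ℝ) * (-2) =
      (4 + 4*t + 4*t^3)/(1+t^2)^2 := by
    field_simp
    ring
  have hdet : 0 < (2 + 2*(1 + t^2)^2 + 2*t + 2*t^3)/(1 + t^2) * (2/(1 + t^2)) -
      (-2 : ℝ) * (-2) := by
    rw [he]
    apply div_pos _ (by positivity)
    nlinarith [mul_nonneg ht (sq_nonneg t)]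
  exact posdef_fin_two ha hdet

theorem gm_trace (t : ℝ) : (gmPath t).trace = -(2*t) + -2 + 4/(1 + t^2) := by
  have h : (1 : ℝ) + t^2 ≠ 0 := by positivity
  simp [Matrix.trace, Fin.sum_univ_two, gmPath, Matrix.diag]
  field_simp
  ring

theorem gm_isPosPath : IsPosPath2 (Set.Ici (0 : ℝ)) gmPath := by
  intro t ht
  refine ⟨gm_sympl t, gmP t, gmP_isSymm t, gmP_posDef ht, ?_⟩
  rw [gm_key t]
  exact gm_hasDeriv _ t

theorem gp_isPosPath : IsPosPath2 (Set.Ici (0 : ℝ)) (fun t => -gmPath t) := by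
  intro t ht
  refine ⟨?_, gmP t, gmP_isSymm t, gmP_posDef ht, ?_⟩
  · simp only [Matrix.transpose_neg, Matrix.neg_mul, Matrix.mul_neg, neg_neg]
    exact gm_sympl t
  · rw [Matrix.mul_neg, gm_key t]
    exact (gm_hasDeriv _ t).neg

theorem gm_trace_tendsto :
    Filter.Tendsto (fun t => (gmPath t).trace) Filter.atTop Filter.atBot := by
  have h1 : Tendsto (fun t : ℝ => -(2*t) + -2) atTop atBot := by
    apply tendsto_atBot_add_const_right
    exact tendsto_neg_atTop_atBot.comp (tendsto_id.const_mul_atTop two_pos)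
  have h2 : Tendsto (fun t : ℝ => (-(2*t) + -2) + 4/(1 + t^2)) atTop atBot := by
    apply tendsto_atBot_add_right_of_ge _ 4 h1
    intro t
    rw [div_le_iff₀ (by positivity)]
    nlinarith [sq_nonneg t]
  exact h2.congr fun t => (gm_trace t).symm

/-- There exist positive paths `γ⁺, γ⁻ : [0,∞) → Sp(2)` whose traces tend to `+∞`
and `-∞` respectively. -/
theorem stmt10 :
    ∃ γp γm : ℝ → Matrix (Fin 2) (Fin 2) ℝ,
      IsPosPath2 (Set.Ici (0 : ℝ)) γp ∧ IsPosPath2 (Set.Ici (0 : ℝ)) γm ∧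
      Filter.Tendsto (fun t => (γp t).trace) Filter.atTop Filter.atTop ∧
      Filter.Tendsto (fun t => (γm t).trace) Filter.atTop Filter.atBot := by
  refine ⟨fun t => -gmPath t, gmPath, gp_isPosPath, gm_isPosPath, ?_, gm_trace_tendsto⟩
  have h := tendsto_neg_atBot_atTop.comp gm_trace_tendsto
  refine h.congr fun t => ?_
  simp [Matrix.trace_neg]
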